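/- Let $M$ be an $N\times N$ Manin matrix with entries in an associative algebra $\mathcal{A}$, and let $X$ be a $k\times(N-k)$ matrix with entries in $\mathcal{A}$ for some $0 \le k \le N$. Then $\mathrm{cdet}\, M = \mathrm{cdet}\big(M \begin{pmatrix} 1 & X \\ 0 & 1 \end{pmatrix}\big)$. -/

import Mathlib

def cdet {A : Type*} [Ring A] {n : ℕ} (M : Matrix (Fin n) (Fin n) A) : A :=
  ∑ σ : Equiv.Perm (Fin n), ((Equiv.Perm.sign σ : ℤ) • (List.ofFn fun j => M (σ j) j).prod)

def IsManin {A : Type*} [Ring A] {m n : Type*} (M : Matrix m n A) : Prop :=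
  (∀ i k j, Commute (M i j) (M k j)) ∧
  (∀ i k j l, M i j * M k l - M k l * M i j = M k j * M i l - M i l * M k j)

namespace Stmt5Aux
variable {A : Type*} [Ring A]

def rprod (f : ℕ → A) (a m : ℕ) : A := ((List.range' a m).map f).prod

@[simp] lemma rprod_zero (f : ℕ → A) (a : ℕ) : rprod f a 0 = 1 := by simp [rprod]

@[simp] lemma rprod_one (f : ℕ → A) (a : ℕ) : rprod f a 1 = f a := by simp [rprod]

lemma rprod_add (f : ℕ → A) (a m m' : ℕ) :
    rprod f a (m + m') = rprod f a m * rprod f (a + m) m' := by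
  rw [rprod, rprod, rprod, ← List.prod_append, ← List.map_append, List.range'_append_1]

lemma rprod_congr {f g : ℕ → A} (a m : ℕ) (h : ∀ j, a ≤ j → j < a + m → f j = g j) :
    rprod f a m = rprod g a m := by
  unfold rprod
  congr 1
  apply List.map_congr_left
  intro x hx
  rw [List.mem_range'_1] at hx
  exact h x hx.1 hx.2

lemma rprod_split1 (f : ℕ → A) {p t : ℕ} (h : p < t) :
    rprod f 0 t = rprod f 0 p * (f p * rprod f (p+1) (t - (p+1))) := by
  have h1 : t = p + (1 + (t - (p+1))) := by omega
  calc rprod f 0 t = rprod f 0 (p + (1 + (t - (p+1)))) := by rw [← h1]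
    _ = _ := by rw [rprod_add, rprod_add, rprod_one, Nat.zero_add]

lemma rprod_split2 (f : ℕ → A) {p t : ℕ} (h : p + 2 ≤ t) :
    rprod f 0 t = rprod f 0 p * (f p * (f (p+1) * rprod f (p+2) (t - (p+2)))) := by
  have h1 : t = p + (1 + (1 + (t - (p+2)))) := by omega
  have h2 : p + 1 + 1 = p + 2 := by omega
  calc rprod f 0 t = rprod f 0 (p + (1 + (1 + (t - (p+2))))) := by rw [← h1]
    _ = _ := by rw [rprod_add, rprod_add, rprod_add, rprod_one, rprod_one, Nat.zero_add, h2]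

lemma ofFn_prod_eq_rprod : ∀ {n : ℕ} (F : Fin n → A),
    (List.ofFn F).prod = rprod (fun j => if h : j < n then F ⟨j, h⟩ else 1) 0 n := by
  intro n
  induction n with
  | zero => intro F; simp
  | succ n ih =>
    intro F
    rw [List.ofFn_succ', List.concat_eq_append, List.prod_append, List.prod_singleton,
      ih (fun i => F i.castSucc), rprod_add, rprod_one]
    congr 1
    · apply rprod_congr
      intro j _ hj
      rw [Nat.zero_add] at hj
      rw [dif_pos hj, dif_pos (Nat.lt_succ_of_lt hj)]
      rfl
    · rw [Nat.zero_add, dif_pos (Nat.lt_succ_self n)]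
      rfl

/-- entries along a permutation with column-selection `g` -/
def ent {n : ℕ} (M : Matrix (Fin n) (Fin n) A) (σ : Equiv.Perm (Fin n))
    (g : Fin n → Fin n) : ℕ → A :=
  fun j => if h : j < n then M (σ ⟨j, h⟩) (g ⟨j, h⟩) else 1

lemma ent_lt {n : ℕ} (M : Matrix (Fin n) (Fin n) A) (σ : Equiv.Perm (Fin n))
    (g : Fin n → Fin n) (j : Fin n) : ent M σ g (j : ℕ) = M (σ j) (g j) := by
  simp [ent]

lemma split_form {n : ℕ} (M : Matrix (Fin n) (Fin n) A) (σ τ : Equiv.Perm (Fin n))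
    (g gg : Fin n → Fin n) {t p : ℕ} (hpt : p + 2 ≤ t) (htn : t ≤ n)
    (hagree : ∀ j (h : j < n), j ≠ p → j ≠ p + 1 → j < t →
      M (τ ⟨j, h⟩) (gg ⟨j, h⟩) = M (σ ⟨j, h⟩) (g ⟨j, h⟩)) :
    rprod (ent M τ gg) 0 t =
      rprod (ent M σ g) 0 p *
        (ent M τ gg p * (ent M τ gg (p+1) * rprod (ent M σ g) (p+2) (t-(p+2)))) := by
  rw [rprod_split2 _ hpt]
  congr 1
  · apply rprod_congr
    intro j _ hj
    rw [Nat.zero_add] at hj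
    have hjn : j < n := by omega
    simp only [ent, dif_pos hjn]
    exact hagree j hjn (by omega) (by omega) (by omega)
  · congr 2
    apply rprod_congr
    intro j hj hj2
    have hjn : j < n := by omega
    simp only [ent, dif_pos hjn]
    exact hagree j hjn (by omega) (by omega) (by omega)

lemma sign_mul_swap_int {n : ℕ} (σ : Equiv.Perm (Fin n)) {a b : Fin n} (hne : a ≠ b) :
    ((Equiv.Perm.sign (σ * Equiv.swap a b) : ℤˣ) : ℤ) = -((Equiv.Perm.sign σ : ℤˣ) : ℤ) := by
  rw [Equiv.Perm.sign_mul, Equiv.Perm.sign_swap hne]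
  simp

lemma mul_swap_ne {n : ℕ} (σ : Equiv.Perm (Fin n)) {a b : Fin n} (hne : a ≠ b) :
    σ * Equiv.swap a b ≠ σ := by
  intro h
  have h2 : (σ * Equiv.swap a b) a = σ a := by rw [h]
  rw [Equiv.Perm.mul_apply, Equiv.swap_apply_left] at h2
  exact hne (σ.injective h2).symm

lemma mul_swap_invol {n : ℕ} (σ : Equiv.Perm (Fin n)) (a b : Fin n) :
    σ * Equiv.swap a b * Equiv.swap a b = σ := by
  rw [mul_assoc, Equiv.swap_mul_self, mul_one]

lemma vanish {n : ℕ} {M : Matrix (Fin n) (Fin n) A} (hM : IsManin M)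
    (t : ℕ) (ht : t ≤ n) (w : Equiv.Perm (Fin n) → A)
    (hw : ∀ (σ : Equiv.Perm (Fin n)) (p q : Fin n), (p : ℕ) < t → (q : ℕ) < t →
      w (σ * Equiv.swap p q) = w σ) :
    ∀ (d : ℕ) (g : Fin n → Fin n) (j1 j2 : Fin n), (j1 : ℕ) < (j2 : ℕ) → (j2 : ℕ) < t →
      g j1 = g j2 → (j2 : ℕ) - (j1 : ℕ) = d →
      ∑ σ : Equiv.Perm (Fin n),
        ((Equiv.Perm.sign σ : ℤ) • (rprod (ent M σ g) 0 t * w σ)) = 0 := by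
  intro d
  induction d using Nat.strong_induction_on with
  | _ d ih =>
  intro g j1 j2 h12 h2t hg hd
  have hne : j1 ≠ j2 := Fin.ne_of_val_ne (by omega)
  by_cases hadj : (j2 : ℕ) = (j1 : ℕ) + 1
  · -- adjacent equal columns: pair σ ↦ σ * swap j1 j2
    apply Finset.sum_ninvolution (fun σ => σ * Equiv.swap j1 j2)
    · intro σ
      have hP : rprod (ent M (σ * Equiv.swap j1 j2) g) 0 t = rprod (ent M σ g) 0 t := by
        rw [split_form M σ (σ * Equiv.swap j1 j2) g g (p := (j1 : ℕ)) (by omega) ht ?agree,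
            rprod_split2 _ (t := t) (p := (j1 : ℕ)) (by omega)]
        case agree =>
          intro j hjn hj1 hj2 hjt
          simp only [Equiv.Perm.mul_apply]
          rw [Equiv.swap_apply_of_ne_of_ne (Fin.ne_of_val_ne hj1)
            (Fin.ne_of_val_ne (show j ≠ (j2 : ℕ) by omega))]
        congr 1
        rw [← mul_assoc, ← mul_assoc]
        congr 1
        have e1 : ent M (σ * Equiv.swap j1 j2) g (j1 : ℕ) = M (σ j2) (g j1) := by
          rw [ent_lt, Equiv.Perm.mul_apply, Equiv.swap_apply_left]
        have e2 : ent M (σ * Equiv.swap j1 j2) g ((j1 : ℕ) + 1) = M (σ j1) (g j2) := by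
          rw [← hadj, ent_lt, Equiv.Perm.mul_apply, Equiv.swap_apply_right]
        have e3 : ent M σ g (j1 : ℕ) = M (σ j1) (g j1) := ent_lt ..
        have e4 : ent M σ g ((j1 : ℕ) + 1) = M (σ j2) (g j2) := by rw [← hadj, ent_lt]
        rw [e1, e2, e3, e4, ← hg]
        exact (hM.1 (σ j2) (σ j1) (g j1)).eq
      rw [hw σ j1 j2 (by omega) (by omega), hP, sign_mul_swap_int σ hne, neg_smul]
      exact add_neg_cancel _
    · intro σ _
      exact mul_swap_ne σ hne
    · intro σ; exact Finset.mem_univ _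
    · intro σ; exact mul_swap_invol σ j1 j2
  · -- non-adjacent: bubble
    have h1n : (j1 : ℕ) + 1 < n := by omega
    set j1' : Fin n := ⟨(j1 : ℕ) + 1, h1n⟩ with hj1'
    have hne' : j1 ≠ j1' := Fin.ne_of_val_ne (by simp [hj1'])
    set g' : Fin n → Fin n := fun x => g (Equiv.swap j1 j1' x) with hg'
    have hs2 : Equiv.swap j1 j1' j2 = j2 :=
      Equiv.swap_apply_of_ne_of_ne (Fin.ne_of_val_ne (by omega))
        (Fin.ne_of_val_ne (by simp [hj1']; omega))
    have hIH : ∑ σ : Equiv.Perm (Fin n),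
        ((Equiv.Perm.sign σ : ℤ) • (rprod (ent M σ g') 0 t * w σ)) = 0 := by
      apply ih (d - 1) (by omega) g' j1' j2 (by simp [hj1']; omega) h2t
      · show g (Equiv.swap j1 j1' j1') = g (Equiv.swap j1 j1' j2)
        rw [Equiv.swap_apply_right, hs2, hg]
      · simp [hj1']; omega
    have hsum : (∑ σ : Equiv.Perm (Fin n),
          ((Equiv.Perm.sign σ : ℤ) • (rprod (ent M σ g) 0 t * w σ))) +
        (∑ σ : Equiv.Perm (Fin n),
          ((Equiv.Perm.sign σ : ℤ) • (rprod (ent M σ g') 0 t * w σ))) = 0 := by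
      rw [← Finset.sum_add_distrib]
      apply Finset.sum_ninvolution (fun σ => σ * Equiv.swap j1 j1')
      · intro σ
        set s' := Equiv.swap j1 j1' with hs'
        have hagree : ∀ (τ : Equiv.Perm (Fin n)) (gg : Fin n → Fin n),
            (∀ x, x ≠ j1 → x ≠ j1' → τ x = σ x ∧ gg x = g x) →
            ∀ j (h : j < n), j ≠ (j1 : ℕ) → j ≠ (j1 : ℕ) + 1 → j < t →
              M (τ ⟨j, h⟩) (gg ⟨j, h⟩) = M (σ ⟨j, h⟩) (g ⟨j, h⟩) := by
          intro τ gg hx j h hj1 hj2 hjt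
          have hx1 : (⟨j, h⟩ : Fin n) ≠ j1 := Fin.ne_of_val_ne hj1
          have hx2 : (⟨j, h⟩ : Fin n) ≠ j1' := Fin.ne_of_val_ne (by simp [hj1']; omega)
          rw [(hx _ hx1 hx2).1, (hx _ hx1 hx2).2]
        have hfix : ∀ x, x ≠ j1 → x ≠ j1' → s' x = x := fun x h1 h2 =>
          Equiv.swap_apply_of_ne_of_ne h1 h2
        have hA : rprod (ent M σ g) 0 t =
            rprod (ent M σ g) 0 (j1 : ℕ) *
              (M (σ j1) (g j1) * (M (σ j1') (g j1') *
                  rprod (ent M σ g) ((j1 : ℕ)+2) (t-((j1 : ℕ)+2)))) := by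
          rw [split_form M σ σ g g (p := (j1 : ℕ)) (by omega) ht (fun _ _ _ _ _ => rfl)]
          congr 2
          · exact ent_lt ..
          · congr 1
            exact ent_lt M σ g j1'
        have hB : rprod (ent M σ g') 0 t =
            rprod (ent M σ g) 0 (j1 : ℕ) *
              (M (σ j1) (g j1') * (M (σ j1') (g j1) *
                  rprod (ent M σ g) ((j1 : ℕ)+2) (t-((j1 : ℕ)+2)))) := by
          rw [split_form M σ σ g g' (p := (j1 : ℕ)) (by omega) ht
            (hagree σ g' (fun x h1 h2 => ⟨rfl, by simp only [hg']; rw [hfix x h1 h2]⟩))]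
          congr 2
          · rw [ent_lt]
            simp [hg', hs', Equiv.swap_apply_left]
          · congr 1
            rw [ent_lt M σ g' j1']
            simp [hg', hs', Equiv.swap_apply_right]
        have hC : rprod (ent M (σ * s') g) 0 t =
            rprod (ent M σ g) 0 (j1 : ℕ) *
              (M (σ j1') (g j1) * (M (σ j1) (g j1') *
                  rprod (ent M σ g) ((j1 : ℕ)+2) (t-((j1 : ℕ)+2)))) := by
          rw [split_form M σ (σ * s') g g (p := (j1 : ℕ)) (by omega) ht
            (hagree (σ * s') g (fun x h1 h2 => ⟨by
              rw [Equiv.Perm.mul_apply, hfix x h1 h2], rfl⟩))]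
          congr 2
          · rw [ent_lt, Equiv.Perm.mul_apply]
            simp [hs', Equiv.swap_apply_left]
          · congr 1
            rw [ent_lt M (σ * s') g j1', Equiv.Perm.mul_apply]
            simp [hs', Equiv.swap_apply_right]
        have hD : rprod (ent M (σ * s') g') 0 t =
            rprod (ent M σ g) 0 (j1 : ℕ) *
              (M (σ j1') (g j1') * (M (σ j1) (g j1) *
                  rprod (ent M σ g) ((j1 : ℕ)+2) (t-((j1 : ℕ)+2)))) := by
          rw [split_form M σ (σ * s') g g' (p := (j1 : ℕ)) (by omega) ht
            (hagree (σ * s') g' (fun x h1 h2 => ⟨by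
              rw [Equiv.Perm.mul_apply, hfix x h1 h2], by
              simp only [hg']; rw [hfix x h1 h2]⟩))]
          congr 2
          · rw [ent_lt, Equiv.Perm.mul_apply]
            simp [hs', hg', Equiv.swap_apply_left, Equiv.swap_apply_right]
          · congr 1
            rw [ent_lt M (σ * s') g' j1', Equiv.Perm.mul_apply]
            simp [hs', hg', Equiv.swap_apply_left, Equiv.swap_apply_right]
        -- Manin relation
        have hbr : M (σ j1) (g j1) * M (σ j1') (g j1') + M (σ j1) (g j1') * M (σ j1') (g j1)
            - (M (σ j1') (g j1) * M (σ j1) (g j1') + M (σ j1') (g j1') * M (σ j1) (g j1))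
            = 0 := by
          have h := hM.2 (σ j1) (σ j1') (g j1) (g j1')
          have h2 : M (σ j1) (g j1) * M (σ j1') (g j1') + M (σ j1) (g j1') * M (σ j1') (g j1)
              - (M (σ j1') (g j1) * M (σ j1) (g j1') + M (σ j1') (g j1') * M (σ j1) (g j1))
              = (M (σ j1) (g j1) * M (σ j1') (g j1')
                  - M (σ j1') (g j1') * M (σ j1) (g j1))
                - (M (σ j1') (g j1) * M (σ j1) (g j1')
                  - M (σ j1) (g j1') * M (σ j1') (g j1)) := by abel
          rw [h2, h, sub_self]
        rw [hA, hB, hC, hD, hw σ j1 j1' (by omega) (by simp [hj1']; omega),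
          sign_mul_swap_int σ hne', neg_smul, neg_smul]
        set Z := (Equiv.Perm.sign σ : ℤ)
        set P := rprod (ent M σ g) 0 (j1 : ℕ)
        set S := rprod (ent M σ g) ((j1 : ℕ)+2) (t-((j1 : ℕ)+2))
        set a := M (σ j1) (g j1)
        set b := M (σ j1') (g j1')
        set c := M (σ j1) (g j1')
        set e := M (σ j1') (g j1)
        have key : P * (a * (b * S)) * w σ + P * (c * (e * S)) * w σ
            - P * (e * (c * S)) * w σ - P * (b * (a * S)) * w σ
            = (P * ((a * b + c * e - (e * c + b * a)) * S)) * w σ := by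
          noncomm_ring
        calc Z • (P * (a * (b * S)) * w σ) + Z • (P * (c * (e * S)) * w σ) +
              (-(Z • (P * (e * (c * S)) * w σ)) + -(Z • (P * (b * (a * S)) * w σ)))
            = Z • (P * (a * (b * S)) * w σ + P * (c * (e * S)) * w σ
                - P * (e * (c * S)) * w σ - P * (b * (a * S)) * w σ) := by
              rw [smul_sub, smul_sub, smul_add]; abel
          _ = Z • ((P * ((a * b + c * e - (e * c + b * a)) * S)) * w σ) := by rw [key]
          _ = 0 := by rw [hbr, zero_mul, mul_zero, zero_mul, smul_zero]
      · intro σ _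
        exact mul_swap_ne σ hne'
      · intro σ; exact Finset.mem_univ _
      · intro σ; exact mul_swap_invol σ j1 j1'
    calc (∑ σ : Equiv.Perm (Fin n),
          ((Equiv.Perm.sign σ : ℤ) • (rprod (ent M σ g) 0 t * w σ)))
        = (∑ σ : Equiv.Perm (Fin n),
            ((Equiv.Perm.sign σ : ℤ) • (rprod (ent M σ g) 0 t * w σ))) +
          (∑ σ : Equiv.Perm (Fin n),
            ((Equiv.Perm.sign σ : ℤ) • (rprod (ent M σ g') 0 t * w σ))) := by
          rw [hIH, add_zero]
      _ = 0 := hsum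


lemma cdet_eq_rprod {n : ℕ} (N : Matrix (Fin n) (Fin n) A) :
    cdet N = ∑ σ : Equiv.Perm (Fin n),
      ((Equiv.Perm.sign σ : ℤ) • rprod (ent N σ id) 0 n) := by
  unfold cdet
  apply Finset.sum_congr rfl
  intro σ _
  rw [ofFn_prod_eq_rprod]
  rfl

def UB {k l : ℕ} (X : Matrix (Fin k) (Fin l) A) : Matrix (Fin (k + l)) (Fin (k + l)) A :=
  (Matrix.fromBlocks 1 X 0 1).submatrix finSumFinEquiv.symm finSumFinEquiv.symm

lemma MU_left {k l : ℕ} (M : Matrix (Fin (k + l)) (Fin (k + l)) A)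
    (X : Matrix (Fin k) (Fin l) A) (i : Fin (k + l)) (a : Fin k) :
    (M * UB X) i (Fin.castAdd l a) = M i (Fin.castAdd l a) := by
  rw [Matrix.mul_apply, ← Equiv.sum_comp finSumFinEquiv
    (fun t => M i t * UB X t (Fin.castAdd l a)), Fintype.sum_sum_type]
  simp [UB, Matrix.one_apply, mul_ite, mul_one, mul_zero, Finset.sum_ite_eq']

lemma MU_right {k l : ℕ} (M : Matrix (Fin (k + l)) (Fin (k + l)) A)
    (X : Matrix (Fin k) (Fin l) A) (i : Fin (k + l)) (b : Fin l) :
    (M * UB X) i (Fin.natAdd k b) =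
      M i (Fin.natAdd k b) + ∑ a : Fin k, M i (Fin.castAdd l a) * X a b := by
  rw [Matrix.mul_apply, ← Equiv.sum_comp finSumFinEquiv
    (fun t => M i t * UB X t (Fin.natAdd k b)), Fintype.sum_sum_type]
  simp [UB, Matrix.one_apply, mul_ite, mul_one, mul_zero, Finset.sum_ite_eq', add_comm]

theorem main {k l : ℕ} (M : Matrix (Fin (k + l)) (Fin (k + l)) A) (hM : IsManin M)
    (X : Matrix (Fin k) (Fin l) A) : cdet M = cdet (M * UB X) := by
  set MU := M * UB X with hMU
  set N : ℕ → Matrix (Fin (k + l)) (Fin (k + l)) A :=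
    fun s i j => if (j : ℕ) < s then M i j else MU i j with hN
  have hNn : N (k + l) = M := by
    funext i j
    simp only [hN]
    rw [if_pos j.isLt]
  have hN0 : N 0 = MU := by
    funext i j
    simp only [hN]
    rw [if_neg (by omega)]
  have hstep : ∀ t, t < k + l → cdet (N (t + 1)) = cdet (N t) := by
    intro t htn
    by_cases htk : t < k
    · have hEq : N (t + 1) = N t := by
        funext i j
        simp only [hN]
        rcases lt_trichotomy (j : ℕ) t with h | h | h
        · rw [if_pos (by omega), if_pos h]
        · rw [if_pos (by omega), if_neg (by omega)]
          have hj : j = Fin.castAdd l ⟨t, htk⟩ := Fin.ext (by simpa using h)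
          rw [hj, hMU, MU_left]
        · rw [if_neg (by omega), if_neg (by omega)]
      rw [hEq]
    · push_neg at htk
      set b : Fin l := ⟨t - k, by omega⟩ with hb
      set jt : Fin (k + l) := ⟨t, htn⟩ with hjt
      have hjtnat : jt = Fin.natAdd k b := Fin.ext (by simp [hjt, hb]; omega)
      have hMUjt : ∀ i, MU i jt = M i jt + ∑ a : Fin k, M i (Fin.castAdd l a) * X a b := by
        intro i
        rw [hjtnat, hMU, MU_right]
      set G : Fin k → Fin (k + l) → Fin (k + l) :=
        fun a x => if x = jt then Fin.castAdd l a else x with hG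
      set P : Equiv.Perm (Fin (k + l)) → A := fun σ => rprod (ent M σ id) 0 t with hP
      set W : Equiv.Perm (Fin (k + l)) → A :=
        fun σ => rprod (ent MU σ id) (t + 1) (k + l - (t + 1)) with hW
      have entM : ∀ (T : Matrix (Fin (k+l)) (Fin (k+l)) A) (σ : Equiv.Perm (Fin (k+l)))
          (g : Fin (k+l) → Fin (k+l)) (j : ℕ) (h : j < k + l),
          ent T σ g j = T (σ ⟨j, h⟩) (g ⟨j, h⟩) := fun T σ g j h => dif_pos h
      have hpre : ∀ (s : ℕ) (σ : Equiv.Perm (Fin (k+l))), t ≤ s →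
          rprod (ent (N s) σ id) 0 t = P σ := by
        intro s σ hts
        apply rprod_congr
        intro j _ hj
        rw [Nat.zero_add] at hj
        have hjn : j < k + l := by omega
        rw [entM _ σ id j hjn, entM M σ id j hjn]
        simp only [hN, id_eq]
        rw [if_pos (show j < s by omega)]
      have hsuf : ∀ (s : ℕ) (σ : Equiv.Perm (Fin (k+l))), s ≤ t + 1 →
          rprod (ent (N s) σ id) (t + 1) (k + l - (t + 1)) = W σ := by
        intro s σ hts
        apply rprod_congr
        intro j hj1 hj2
        have hjn : j < k + l := by omega
        rw [entM _ σ id j hjn, entM MU σ id j hjn]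
        simp only [hN, id_eq]
        rw [if_neg (show ¬ j < s by omega)]
      have hmid1 : ∀ σ : Equiv.Perm (Fin (k+l)), ent (N (t+1)) σ id t = M (σ jt) jt := by
        intro σ
        rw [entM _ σ id t htn]
        simp only [hN, id_eq]
        rw [if_pos (show t < t + 1 by omega)]
      have hmid2 : ∀ σ : Equiv.Perm (Fin (k+l)), ent (N t) σ id t
          = M (σ jt) jt + ∑ a : Fin k, M (σ jt) (Fin.castAdd l a) * X a b := by
        intro σ
        rw [entM _ σ id t htn]
        simp only [hN, id_eq]
        rw [if_neg (show ¬ t < t by omega)]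
        exact hMUjt (σ jt)
      have h1 : ∀ σ : Equiv.Perm (Fin (k+l)), rprod (ent (N (t+1)) σ id) 0 (k+l)
          = P σ * (M (σ jt) jt * W σ) := by
        intro σ
        rw [rprod_split1 _ (show t < k + l from htn), hpre (t+1) σ (by omega),
          hsuf (t+1) σ (le_refl _), hmid1 σ]
      have h2 : ∀ σ : Equiv.Perm (Fin (k+l)), rprod (ent (N t) σ id) 0 (k+l)
          = P σ * ((M (σ jt) jt + ∑ a : Fin k, M (σ jt) (Fin.castAdd l a) * X a b) * W σ) := by
        intro σ
        rw [rprod_split1 _ (show t < k + l from htn), hpre t σ (le_refl _),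
          hsuf t σ (by omega), hmid2 σ]
      have hterm : ∀ (σ : Equiv.Perm (Fin (k+l))) (a : Fin k),
          rprod (ent M σ (G a)) 0 (t + 1) = P σ * M (σ jt) (Fin.castAdd l a) := by
        intro σ a
        rw [rprod_add _ 0 t 1, Nat.zero_add, rprod_one]
        congr 1
        · apply rprod_congr
          intro j _ hj
          rw [Nat.zero_add] at hj
          have hjn : j < k + l := by omega
          rw [entM M σ (G a) j hjn, entM M σ id j hjn]
          simp only [hG, id_eq]
          rw [if_neg (Fin.ne_of_val_ne (show j ≠ t by omega))]
        · rw [entM M σ (G a) t htn]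
          have hjj : (⟨t, htn⟩ : Fin (k+l)) = jt := rfl
          rw [hjj]
          simp only [hG]
          simp
      have hvan : ∀ a : Fin k, ∑ σ : Equiv.Perm (Fin (k+l)),
          ((Equiv.Perm.sign σ : ℤ) •
            (rprod (ent M σ (G a)) 0 (t + 1) * (X a b * W σ))) = 0 := by
        intro a
        refine vanish hM (t+1) (by omega) (fun σ => X a b * W σ) ?_ ((jt:ℕ) - a)
          (G a) (Fin.castAdd l a) jt ?_ ?_ ?_ rfl
        · intro σ p q hp hq
          show X a b * W (σ * Equiv.swap p q) = X a b * W σ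
          congr 1
          apply rprod_congr
          intro j hj1 hj2
          have hjn : j < k + l := by omega
          rw [entM MU _ id j hjn, entM MU σ id j hjn, Equiv.Perm.mul_apply,
            Equiv.swap_apply_of_ne_of_ne
              (Fin.ne_of_val_ne (show j ≠ (p : ℕ) by omega))
              (Fin.ne_of_val_ne (show j ≠ (q : ℕ) by omega))]
        · exact lt_of_lt_of_le a.isLt htk
        · exact Nat.lt_succ_self t
        · simp only [hG]
          simp
      rw [cdet_eq_rprod (N (t+1)), cdet_eq_rprod (N t)]
      have exp2 : ∑ σ : Equiv.Perm (Fin (k+l)),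
            ((Equiv.Perm.sign σ : ℤ) • rprod (ent (N t) σ id) 0 (k+l))
          = (∑ σ : Equiv.Perm (Fin (k+l)),
              ((Equiv.Perm.sign σ : ℤ) • (P σ * (M (σ jt) jt * W σ))))
            + ∑ a : Fin k, ∑ σ : Equiv.Perm (Fin (k+l)),
              ((Equiv.Perm.sign σ : ℤ) •
                (rprod (ent M σ (G a)) 0 (t + 1) * (X a b * W σ))) := by
        rw [Finset.sum_comm, ← Finset.sum_add_distrib]
        apply Finset.sum_congr rfl
        intro σ _
        rw [h2 σ]
        have : ∀ a : Fin k, (Equiv.Perm.sign σ : ℤ) •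
            (rprod (ent M σ (G a)) 0 (t + 1) * (X a b * W σ))
            = (Equiv.Perm.sign σ : ℤ) •
              (P σ * ((M (σ jt) (Fin.castAdd l a) * X a b) * W σ)) := by
          intro a
          rw [hterm σ a]
          congr 1
          simp [mul_assoc]
        rw [Finset.sum_congr rfl (fun a _ => this a)]
        rw [add_mul, mul_add, smul_add]
        congr 1
        rw [Finset.sum_mul, Finset.mul_sum, Finset.smul_sum]
      rw [exp2, Finset.sum_eq_zero (fun a _ => hvan a), add_zero]
      apply Finset.sum_congr rfl
      intro σ _
      rw [h1 σ]
  have hall : ∀ t, t ≤ k + l → cdet (N t) = cdet (N 0) := by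
    intro t
    induction t with
    | zero => intro _; rfl
    | succ t iht => intro h; rw [hstep t (by omega), iht (by omega)]
  calc cdet M = cdet (N (k + l)) := by rw [hNn]
    _ = cdet (N 0) := hall (k + l) (le_refl _)
    _ = cdet MU := by rw [hN0]


end Stmt5Aux

/-- Multiplying a Manin matrix on the right by a block upper unitriangular matrix
`(1 X; 0 1)` does not change the column-ordered determinant. -/
theorem stmt5 {A : Type*} [Ring A] (k l : ℕ)
    (M : Matrix (Fin (k + l)) (Fin (k + l)) A) (hM : IsManin M)
    (X : Matrix (Fin k) (Fin l) A) :
    cdet M =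
      cdet (M * ((Matrix.fromBlocks 1 X 0 1).submatrix
        finSumFinEquiv.symm finSumFinEquiv.symm)) := by
  exact Stmt5Aux.main M hM X
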